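/- The set of answers to a compound graph pattern (Definition of S(P,G) via operations on map sets) coincides with the set of maps σ restricted to the variables of P such that G entails σ(P) under the inductive entailment-modulo-σ definition; in particular for P = P1 AND P2, S(P1,G) ⋈ S(P2,G) = {σ|_{B(P)} : G ⊨ σ(P1) and G ⊨ σ(P2)} whenever S(Pi,G) = {σ|_{B(Pi)} : G ⊨ σ(Pi)} for i = 1, 2 and the basic entailment is monotone under extension of maps. -/

import Mathlib

/-- Two maps are compatible when they agree on the intersection of their domains. -/
def Compatible {T V : Type} (σ1 σ2 : V → Option T) : Prop :=
  ∀ x a b, σ1 x = some a → σ2 x = some b → a = b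

/-- The join σ1 ⊕ σ2 of two maps. -/
def joinMap {T V : Type} (σ1 σ2 : V → Option T) : V → Option T :=
  fun x => (σ1 x).orElse (fun _ => σ2 x)

/-- The compatible-join of two sets of maps. -/
def SetJoin {T V : Type} (Ω1 Ω2 : Set (V → Option T)) : Set (V → Option T) :=
  {σ | ∃ σ1 ∈ Ω1, ∃ σ2 ∈ Ω2, Compatible σ1 σ2 ∧ σ = joinMap σ1 σ2}

open Classical in
/-- The restriction of σ to B, null (none) outside B. -/
noncomputable def restrictC {T V : Type} (σ : V → Option T) (B : Set V) :
    V → Option T :=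
  fun v => if v ∈ B then σ v else none

/-- The compositional semantics of AND agrees with entailment modulo a map:
if S(Pi,G) = {σ|_{B(Pi)} : G ⊨ σ(Pi)} (formalized through the entailment
predicates E1, E2 depending only on the values of σ on B1, resp. B2), and joins
of compatible answers restrict back to the answers they come from, then
S(P1,G) ⋈ S(P2,G) = {σ|_{B(P1)∪B(P2)} : G ⊨ σ(P1) and G ⊨ σ(P2)}. -/
theorem and_answers_join {T V : Type} (B1 B2 : Set V)
    (E1 E2 : (V → Option T) → Prop)
    (hE1 : ∀ σ σ', (∀ v ∈ B1, σ v = σ' v) → (E1 σ ↔ E1 σ'))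
    (hE2 : ∀ σ σ', (∀ v ∈ B2, σ v = σ' v) → (E2 σ ↔ E2 σ'))
    (hrec : ∀ σ1 σ2, (∃ σ, E1 σ ∧ σ1 = restrictC σ B1) →
      (∃ σ, E2 σ ∧ σ2 = restrictC σ B2) → Compatible σ1 σ2 →
      restrictC (joinMap σ1 σ2) B1 = σ1 ∧ restrictC (joinMap σ1 σ2) B2 = σ2) :
    SetJoin {m | ∃ σ, E1 σ ∧ m = restrictC σ B1}
        {m | ∃ σ, E2 σ ∧ m = restrictC σ B2} =
      {m | ∃ σ, E1 σ ∧ E2 σ ∧ m = restrictC σ (B1 ∪ B2)} := by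
  ext m
  constructor
  · rintro ⟨σ1, ⟨τ1, hτ1, h1⟩, σ2, ⟨τ2, hτ2, h2⟩, hc, rfl⟩
    obtain ⟨r1, r2⟩ := hrec σ1 σ2 ⟨τ1, hτ1, h1⟩ ⟨τ2, hτ2, h2⟩ hc
    refine ⟨joinMap σ1 σ2, ?_, ?_, ?_⟩
    · refine (hE1 (joinMap σ1 σ2) τ1 fun v hv => ?_).mpr hτ1
      have := congrFun r1 v
      have h1v := congrFun h1 v
      simp [restrictC, hv] at this h1v
      rw [this, h1v]
    · refine (hE2 (joinMap σ1 σ2) τ2 fun v hv => ?_).mpr hτ2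
      have := congrFun r2 v
      have h2v := congrFun h2 v
      simp [restrictC, hv] at this h2v
      rw [this, h2v]
    · funext v
      by_cases hv : v ∈ B1 ∪ B2
      · simp [restrictC, hv]
      · simp only [Set.mem_union, not_or] at hv
        have e1 : σ1 v = none := by rw [h1]; simp [restrictC, hv.1]
        have e2 : σ2 v = none := by rw [h2]; simp [restrictC, hv.2]
        simp [restrictC, joinMap, e1, e2, hv.1, hv.2]
  · rintro ⟨σ, h1, h2, rfl⟩
    refine ⟨restrictC σ B1, ⟨σ, h1, rfl⟩, restrictC σ B2, ⟨σ, h2, rfl⟩, ?_, ?_⟩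
    · intro x a b ha hb
      simp only [restrictC] at ha hb
      split at ha <;> split at hb <;> simp_all
    · funext v
      by_cases hv1 : v ∈ B1
      · cases hσ : σ v <;>
          simp [restrictC, joinMap, hv1, hσ, Set.mem_union, Option.orElse]
      · by_cases hv2 : v ∈ B2 <;>
          simp [restrictC, joinMap, hv1, hv2, Set.mem_union, Option.orElse]
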